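/- For the doubled quiver Â Â_n (vertices 1,…,n, arrows α_i: i→i+1 and β_i: i+1→i, with relations α_i β_i = 0 = β_i α_i), every representation I_{i,j}^Σ is indecomposable; here for 1 ≤ i ≤ j ≤ n and a sign sequence Σ ∈ {+,−}^{j−i}, the representation I_{i,j}^Σ places ℂ at vertices k with i ≤ k ≤ j and 0 elsewhere, with the arrow (k → k+1) acting as identity and (k+1 → k) as zero when Σ gives +, and the reverse when Σ gives −. -/

import Mathlib

/-! Representations of the doubled quiver `ÂÂ_n`: vertices `1, …, n`, arrows
`α_k : k → k+1` and `β_k : k+1 → k`, with relations `α_k β_k = 0 = β_k α_k`. -/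

/-- A representation of the quiver `ÂÂ_n` with relations "all 2-cycles are zero".
Vertex `k+1` (for `k : Fin n`) carries the vector space `V k`. -/
structure AARep (n : ℕ) where
  V : Fin n → Type
  [acg : ∀ k, AddCommGroup (V k)]
  [mod : ∀ k, Module ℂ (V k)]
  a : ∀ (k : ℕ) (h : k + 1 < n), V ⟨k, Nat.lt_of_succ_lt h⟩ →ₗ[ℂ] V ⟨k + 1, h⟩
  b : ∀ (k : ℕ) (h : k + 1 < n), V ⟨k + 1, h⟩ →ₗ[ℂ] V ⟨k, Nat.lt_of_succ_lt h⟩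
  hab : ∀ (k : ℕ) (h : k + 1 < n), (a k h).comp (b k h) = 0
  hba : ∀ (k : ℕ) (h : k + 1 < n), (b k h).comp (a k h) = 0

attribute [instance] AARep.acg AARep.mod

/-- A morphism of representations of `ÂÂ_n`. -/
structure AAHom {n : ℕ} (R S : AARep n) where
  φ : ∀ k, R.V k →ₗ[ℂ] S.V k
  ha : ∀ (k : ℕ) (h : k + 1 < n),
    (φ ⟨k + 1, h⟩).comp (R.a k h) = (S.a k h).comp (φ ⟨k, Nat.lt_of_succ_lt h⟩)
  hb : ∀ (k : ℕ) (h : k + 1 < n),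
    (φ ⟨k, Nat.lt_of_succ_lt h⟩).comp (R.b k h) = (S.b k h).comp (φ ⟨k + 1, h⟩)

/-- A representation of `ÂÂ_n` is indecomposable iff it is nonzero and its only
idempotent endomorphisms are `0` and the identity. -/
def AAIndec {n : ℕ} (R : AARep n) : Prop :=
  (∃ k, ∃ x : R.V k, x ≠ 0) ∧
    ∀ e : AAHom R R, (∀ k, (e.φ k).comp (e.φ k) = e.φ k) →
      (∀ k, e.φ k = 0) ∨ (∀ k, e.φ k = LinearMap.id)

/-- The vector space at vertex `v`: `ℂ` if `i ≤ v ≤ j`, `0` otherwise. -/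
noncomputable def Sm (i j v : ℕ) : Submodule ℂ ℂ :=
  if i ≤ v ∧ v ≤ j then ⊤ else ⊥

/-- The map on the arrow `v → v+1` of `I_{i,j}^Σ`: the identity if the sign at
this arrow is `+` (and both endpoints lie in `[i,j]`), zero otherwise. -/
noncomputable def amap (i j : ℕ) (sgn : ℕ → Bool) (v : ℕ) :
    Sm i j v →ₗ[ℂ] Sm i j (v + 1) :=
  if h : i ≤ v ∧ v + 1 ≤ j ∧ sgn (v - i) = true then
    Submodule.inclusion (by
      have h2 : Sm i j (v + 1) = ⊤ := if_pos ⟨by omega, h.2.1⟩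
      rw [h2]; exact le_top)
  else 0

/-- The map on the arrow `v+1 → v` of `I_{i,j}^Σ`: the identity if the sign at
this arrow is `−` (and both endpoints lie in `[i,j]`), zero otherwise. -/
noncomputable def bmap (i j : ℕ) (sgn : ℕ → Bool) (v : ℕ) :
    Sm i j (v + 1) →ₗ[ℂ] Sm i j v :=
  if h : i ≤ v ∧ v + 1 ≤ j ∧ sgn (v - i) = false then
    Submodule.inclusion (by
      have h2 : Sm i j v = ⊤ := if_pos ⟨h.1, by omega⟩
      rw [h2]; exact le_top)
  else 0

lemma ab_zero (i j : ℕ) (sgn : ℕ → Bool) (v : ℕ) :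
    (amap i j sgn v).comp (bmap i j sgn v) = 0 := by
  by_cases hc : i ≤ v ∧ v + 1 ≤ j ∧ sgn (v - i) = true
  · have hnb : ¬ (i ≤ v ∧ v + 1 ≤ j ∧ sgn (v - i) = false) := by
      rintro ⟨-, -, hf⟩; rw [hc.2.2] at hf; exact Bool.noConfusion hf
    rw [bmap, dif_neg hnb, LinearMap.comp_zero]
  · rw [amap, dif_neg hc, LinearMap.zero_comp]

lemma ba_zero (i j : ℕ) (sgn : ℕ → Bool) (v : ℕ) :
    (bmap i j sgn v).comp (amap i j sgn v) = 0 := by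
  by_cases hc : i ≤ v ∧ v + 1 ≤ j ∧ sgn (v - i) = false
  · have hna : ¬ (i ≤ v ∧ v + 1 ≤ j ∧ sgn (v - i) = true) := by
      rintro ⟨-, -, hf⟩; rw [hc.2.2] at hf; exact Bool.noConfusion hf
    rw [amap, dif_neg hna, LinearMap.comp_zero]
  · rw [bmap, dif_neg hc, LinearMap.zero_comp]

/-- The representation `I_{i,j}^Σ` of `ÂÂ_n`: the space `ℂ` at the vertices `v`
with `i ≤ v ≤ j` and `0` elsewhere; on the pair of arrows between vertices `v`
and `v+1` (inside `[i,j]`), the sign `Σ (v - i)` decides which of the two maps is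
the identity, the other being zero (`true` = `+`: the forward map `v → v+1` is
the identity; `false` = `−`: the backward map `v+1 → v` is the identity). -/
noncomputable def Irep (n i j : ℕ) (sgn : ℕ → Bool) : AARep n where
  V := fun k => Sm i j (k.val + 1)
  a := fun k _ => amap i j sgn (k + 1)
  b := fun k _ => bmap i j sgn (k + 1)
  hab := fun k _ => ab_zero i j sgn (k + 1)
  hba := fun k _ => ba_zero i j sgn (k + 1)

lemma mem_Sm {i j v : ℕ} (hv : i ≤ v ∧ v ≤ j) (x : ℂ) : x ∈ Sm i j v := by
  rw [Sm, if_pos hv]; trivial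

lemma Sm_eq_bot {i j v : ℕ} (hv : ¬(i ≤ v ∧ v ≤ j)) : Sm i j v = ⊥ := if_neg hv

lemma zero_of_not_range {i j v : ℕ} (hv : ¬(i ≤ v ∧ v ≤ j)) (x : Sm i j v) :
    x = 0 := by
  apply Subtype.ext
  have hy : ∀ y : ℂ, y ∈ Sm i j v → y = 0 := by
    intro y hy
    rw [Sm_eq_bot hv] at hy
    simpa using hy
  simpa using hy x.val x.2

lemma eq_smul_one {i j v : ℕ} (hv : i ≤ v ∧ v ≤ j) (x : Sm i j v) :
    x = x.val • (⟨1, mem_Sm hv 1⟩ : Sm i j v) := Subtype.ext (by simp)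

lemma apply_val {i j v : ℕ} (hv : i ≤ v ∧ v ≤ j)
    (f : Sm i j v →ₗ[ℂ] Sm i j v) (x : Sm i j v) :
    (f x).val = (f ⟨1, mem_Sm hv 1⟩).val * x.val := by
  conv_lhs => rw [eq_smul_one hv x]
  rw [map_smul]
  simp [mul_comm]

/-- The "scalar" of the endomorphism `e` at vertex `m`. -/
noncomputable def cval (n i j : ℕ) (sgn : ℕ → Bool)
    (e : AAHom (Irep n i j sgn) (Irep n i j sgn)) (m : ℕ) (hm : m < n)
    (hr : i ≤ m + 1 ∧ m + 1 ≤ j) : ℂ :=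
  (e.φ ⟨m, hm⟩ (⟨1, mem_Sm hr 1⟩ : Sm i j (m + 1))).val

lemma link (n i j : ℕ) (sgn : ℕ → Bool)
    (e : AAHom (Irep n i j sgn) (Irep n i j sgn)) (m : ℕ) (hm : m + 1 < n)
    (h1 : i ≤ m + 1) (h2 : m + 2 ≤ j) :
    cval n i j sgn e (m + 1) hm ⟨by omega, by omega⟩ =
      cval n i j sgn e m (by omega) ⟨h1, by omega⟩ := by
  have hv1 : i ≤ m + 1 ∧ m + 1 ≤ j := ⟨h1, by omega⟩
  have hv2 : i ≤ m + 2 ∧ m + 2 ≤ j := ⟨by omega, h2⟩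
  cases hs : sgn (m + 1 - i) with
  | true =>
      have hc : i ≤ m + 1 ∧ m + 1 + 1 ≤ j ∧ sgn (m + 1 - i) = true :=
        ⟨h1, h2, hs⟩
      have key : amap i j sgn (m + 1) (⟨1, mem_Sm hv1 1⟩ : Sm i j (m + 1)) =
          (⟨1, mem_Sm hv2 1⟩ : Sm i j (m + 2)) := by
        apply Subtype.ext
        rw [amap, dif_pos hc]
        rfl
      have h0 := LinearMap.congr_fun (e.ha m hm)
        (⟨1, mem_Sm hv1 1⟩ : Sm i j (m + 1))
      have h0' : e.φ ⟨m + 1, hm⟩ (amap i j sgn (m + 1) ⟨1, mem_Sm hv1 1⟩) =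
          amap i j sgn (m + 1) (e.φ ⟨m, by omega⟩ ⟨1, mem_Sm hv1 1⟩) := h0
      rw [key] at h0'
      have hval := congrArg Subtype.val h0'
      rw [amap, dif_pos hc] at hval
      exact hval
  | false =>
      have hc : i ≤ m + 1 ∧ m + 1 + 1 ≤ j ∧ sgn (m + 1 - i) = false :=
        ⟨h1, h2, hs⟩
      have key : bmap i j sgn (m + 1) (⟨1, mem_Sm hv2 1⟩ : Sm i j (m + 2)) =
          (⟨1, mem_Sm hv1 1⟩ : Sm i j (m + 1)) := by
        apply Subtype.ext
        rw [bmap, dif_pos hc]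
        rfl
      have h0 := LinearMap.congr_fun (e.hb m hm)
        (⟨1, mem_Sm hv2 1⟩ : Sm i j (m + 2))
      have h0' : e.φ ⟨m, by omega⟩ (bmap i j sgn (m + 1) ⟨1, mem_Sm hv2 1⟩) =
          bmap i j sgn (m + 1) (e.φ ⟨m + 1, hm⟩ ⟨1, mem_Sm hv2 1⟩) := h0
      rw [key] at h0'
      have hval := congrArg Subtype.val h0'
      rw [bmap, dif_pos hc] at hval
      exact hval.symm

lemma endo_zero {i j v : ℕ} (hv : i ≤ v ∧ v ≤ j)
    (f : Sm i j v →ₗ[ℂ] Sm i j v) (hc : (f ⟨1, mem_Sm hv 1⟩).val = 0) :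
    f = 0 := by
  apply LinearMap.ext
  intro x
  apply Subtype.ext
  rw [apply_val hv f x, hc, zero_mul]
  rfl

lemma endo_id {i j v : ℕ} (hv : i ≤ v ∧ v ≤ j)
    (f : Sm i j v →ₗ[ℂ] Sm i j v) (hc : (f ⟨1, mem_Sm hv 1⟩).val = 1) :
    f = LinearMap.id := by
  apply LinearMap.ext
  intro x
  apply Subtype.ext
  rw [apply_val hv f x, hc, one_mul]
  rfl

lemma endo_zero' {i j v : ℕ} (hv : ¬(i ≤ v ∧ v ≤ j))
    (f : Sm i j v →ₗ[ℂ] Sm i j v) : f = 0 := by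
  apply LinearMap.ext
  intro x
  rw [LinearMap.zero_apply]
  exact zero_of_not_range hv _

lemma endo_id' {i j v : ℕ} (hv : ¬(i ≤ v ∧ v ≤ j))
    (f : Sm i j v →ₗ[ℂ] Sm i j v) : f = LinearMap.id := by
  apply LinearMap.ext
  intro x
  rw [LinearMap.id_apply]
  exact (zero_of_not_range hv _).trans (zero_of_not_range hv x).symm

lemma chain (n i j : ℕ) (sgn : ℕ → Bool)
    (e : AAHom (Irep n i j sgn) (Irep n i j sgn)) (h1 : 1 ≤ i)
    (m : ℕ) : ∀ (hm : m < n) (hr : i ≤ m + 1 ∧ m + 1 ≤ j),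
    cval n i j sgn e m hm hr =
      cval n i j sgn e (i - 1) (by omega) ⟨by omega, by omega⟩ := by
  induction m with
  | zero =>
      intro hm hr
      have hi : i = 1 := by omega
      subst hi
      rfl
  | succ m ih =>
      intro hm hr
      by_cases hle : i ≤ m + 1
      · have := link n i j sgn e m hm hle hr.2
        exact this.trans (ih (by omega) ⟨hle, by omega⟩)
      · have hi : i = m + 2 := by omega
        subst hi
        rfl

/-- For all `1 ≤ i ≤ j ≤ n` and every sign sequence `Σ`, the representation
`I_{i,j}^Σ` of the doubled quiver `ÂÂ_n` is indecomposable. -/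
theorem stmt_11 (n i j : ℕ) (h1 : 1 ≤ i) (hij : i ≤ j) (hjn : j ≤ n)
    (sgn : ℕ → Bool) : AAIndec (Irep n i j sgn) := by
  have hi1 : i - 1 < n := by omega
  have hr1 : i ≤ (i - 1) + 1 ∧ (i - 1) + 1 ≤ j := ⟨by omega, by omega⟩
  constructor
  · refine ⟨⟨i - 1, hi1⟩, (⟨1, mem_Sm hr1 1⟩ : Sm i j ((i - 1) + 1)), ?_⟩
    intro hx
    have := congrArg Subtype.val hx
    simp at this
    exact one_ne_zero this
  · intro e he
    set c := cval n i j sgn e (i - 1) hi1 hr1 with hcdef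
    have hidem : c * c = c := by
      have h0 := LinearMap.congr_fun (he ⟨i - 1, hi1⟩)
        (⟨1, mem_Sm hr1 1⟩ : Sm i j ((i - 1) + 1))
      have hval := congrArg Subtype.val h0
      have h2 := apply_val hr1
        (e.φ ⟨i - 1, hi1⟩ : Sm i j ((i - 1) + 1) →ₗ[ℂ] Sm i j ((i - 1) + 1))
        ((e.φ ⟨i - 1, hi1⟩ : Sm i j ((i - 1) + 1) →ₗ[ℂ] Sm i j ((i - 1) + 1))
          ⟨1, mem_Sm hr1 1⟩)
      exact h2.symm.trans hval
    have hc01 : c = 0 ∨ c = 1 := by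
      have hz : c * (c - 1) = 0 := by rw [mul_sub, mul_one, hidem, sub_self]
      rcases mul_eq_zero.mp hz with h | h
      · exact Or.inl h
      · exact Or.inr (sub_eq_zero.mp h)
    rcases hc01 with h0 | h0
    · left
      intro k
      by_cases hk : i ≤ k.val + 1 ∧ k.val + 1 ≤ j
      · exact endo_zero hk (e.φ k)
          ((chain n i j sgn e h1 k.val k.2 hk).trans h0)
      · exact endo_zero' hk (e.φ k)
    · right
      intro k
      by_cases hk : i ≤ k.val + 1 ∧ k.val + 1 ≤ j
      · exact endo_id hk (e.φ k)
          ((chain n i j sgn e h1 k.val k.2 hk).trans h0)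
      · exact endo_id' hk (e.φ k)
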